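/- In a majority-vote aggregation over an odd number 2k+1 of independent binary predictions each correct with probability q > 1/2, the probability that the majority is correct is at least q. Formally: if X_1,...,X_{2k+1} are i.i.d. Bernoulli(q) with q ≥ 1/2, then P(Σ X_i ≥ k+1) ≥ q. -/

import Mathlib

open Finset

lemma majority_sum_key (n k : ℕ) (hn : n = 2 * k + 1) (q : ℝ) (hq : 1 / 2 ≤ q) (hq1 : q ≤ 1) :
    q ≤ ∑ t ∈ univ.filter (fun t : Finset (Fin n) => k + 1 ≤ t.card),
        q ^ t.card * (1 - q) ^ tᶜ.card := by
  set p := 1 - q with hp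
  have hp0 : 0 ≤ p := by linarith
  have hpq : p ≤ q := by rw [hp]; linarith
  set w : Finset (Fin n) → ℝ := fun t => q ^ t.card * p ^ tᶜ.card with hw
  have hcompl : ∀ t : Finset (Fin n), tᶜ.card = n - t.card := by
    intro t; rw [Finset.card_compl, Fintype.card_fin]
  have hcardle : ∀ t : Finset (Fin n), t.card ≤ n := by
    intro t
    simpa [Fintype.card_fin] using Finset.card_le_univ t
  -- total sum is 1
  have htot : ∑ t : Finset (Fin n), w t = 1 := by
    have h := Finset.prod_add (fun _ : Fin n => q) (fun _ : Fin n => p) univ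
    simp only [Finset.prod_const, Finset.powerset_univ] at h
    have hqp : q + p = 1 := by rw [hp]; ring
    rw [hqp, one_pow] at h
    rw [h]
    apply Finset.sum_congr rfl
    intro t _
    simp only [hw]
    rw [Finset.compl_eq_univ_sdiff]
  set F := univ.filter (fun t : Finset (Fin n) => k + 1 ≤ t.card) with hF
  -- complement bijection
  have hQ : ∑ t ∈ univ.filter (fun t : Finset (Fin n) => ¬ k + 1 ≤ t.card), w t
      = ∑ t ∈ F, w tᶜ := by
    apply Finset.sum_nbij' (i := fun t => tᶜ) (j := fun t => tᶜ)
    · intro t ht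
      simp only [hF, Finset.mem_filter, Finset.mem_univ, true_and] at ht ⊢
      have := hcardle t
      rw [hcompl t]; omega
    · intro t ht
      simp only [hF, Finset.mem_filter, Finset.mem_univ, true_and] at ht ⊢
      have := hcardle t
      rw [hcompl t]; omega
    · intro t _; exact compl_compl t
    · intro t _; exact compl_compl t
    · intro t _; rw [compl_compl]
  have hsplit := Finset.sum_filter_add_sum_filter_not univ
    (fun t : Finset (Fin n) => k + 1 ≤ t.card) w
  rw [htot, hQ] at hsplit
  -- termwise inequality
  have hterm : ∀ t ∈ F, q * w tᶜ ≤ p * w t := by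
    intro t ht
    have hcard : k + 1 ≤ t.card := by
      simpa [hF] using ht
    have hb : tᶜ.card + 1 ≤ t.card := by
      have := hcardle t; rw [hcompl t]; omega
    obtain ⟨m, hm⟩ : ∃ m, t.card = (tᶜ.card + 1) + m :=
      ⟨t.card - (tᶜ.card + 1), by omega⟩
    have hpm : p ^ m ≤ q ^ m := pow_le_pow_left₀ hp0 hpq m
    have hnn : (0:ℝ) ≤ q ^ (tᶜ.card + 1) * p ^ (tᶜ.card + 1) := by positivity
    simp only [hw, compl_compl]
    set b := tᶜ.card
    rw [hm]
    calc q * (q ^ b * p ^ (b + 1 + m))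
        = (q ^ (b + 1) * p ^ (b + 1)) * p ^ m := by ring
      _ ≤ (q ^ (b + 1) * p ^ (b + 1)) * q ^ m := by
          exact mul_le_mul_of_nonneg_left hpm hnn
      _ = p * (q ^ (b + 1 + m) * p ^ b) := by ring
  have hPQ : q * ∑ t ∈ F, w tᶜ ≤ p * ∑ t ∈ F, w t := by
    rw [Finset.mul_sum, Finset.mul_sum]
    exact Finset.sum_le_sum hterm
  have hfin : q * (1 - ∑ t ∈ F, w t) ≤ p * ∑ t ∈ F, w t := by
    have : ∑ t ∈ F, w tᶜ = 1 - ∑ t ∈ F, w t := by linarith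
    rw [← this]; exact hPQ
  nlinarith [hfin]

open MeasureTheory ProbabilityTheory

/-- Majority vote over `2k+1` i.i.d. Bernoulli(q) predictions with `q ≥ 1/2` is
correct with probability at least `q`. -/
theorem majority_vote_correct_prob_ge
    {Ω : Type*} [MeasurableSpace Ω] (μ : Measure Ω) [IsProbabilityMeasure μ]
    (k : ℕ) (q : ℝ) (hq : 1 / 2 ≤ q)
    (X : Fin (2 * k + 1) → Ω → ℕ)
    (hmeas : ∀ i, Measurable (X i))
    (hind : iIndepFun X μ)
    (hbin : ∀ i ω, X i ω ≤ 1)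
    (hber : ∀ i, μ {ω | X i ω = 1} = ENNReal.ofReal q) :
    ENNReal.ofReal q ≤ μ {ω | k + 1 ≤ ∑ i, X i ω} := by
  have hq0 : (0:ℝ) ≤ q := le_trans (by norm_num) hq
  have hq1 : q ≤ 1 := by
    have h := (hber 0)
    have h2 : ENNReal.ofReal q ≤ 1 := h ▸ prob_le_one
    exact ENNReal.ofReal_le_one.mp h2
  set p := 1 - q with hp
  have hp0 : (0:ℝ) ≤ p := by rw [hp]; linarith
  have h1 : ∀ i, μ (X i ⁻¹' {1}) = ENNReal.ofReal q := fun i => hber i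
  have h0 : ∀ i, μ (X i ⁻¹' {0}) = ENNReal.ofReal p := by
    intro i
    have hc : X i ⁻¹' {0} = (X i ⁻¹' {1})ᶜ := by
      ext ω
      simp only [Set.mem_preimage, Set.mem_singleton_iff, Set.mem_compl_iff]
      have := hbin i ω
      omega
    rw [hc, prob_compl_eq_one_sub (hmeas i (measurableSet_singleton 1)), h1 i, hp,
      ENNReal.ofReal_sub _ hq0, ENNReal.ofReal_one]
  set ind : Finset (Fin (2 * k + 1)) → Fin (2 * k + 1) → ℕ := fun t i => if i ∈ t then 1 else 0 with hind_def
  set E : Finset (Fin (2 * k + 1)) → Set Ω := fun t => ⋂ i, X i ⁻¹' {ind t i} with hE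
  have hEmeas : ∀ t, MeasurableSet (E t) :=
    fun t => MeasurableSet.iInter fun i => hmeas i (measurableSet_singleton _)
  set F := Finset.univ.filter (fun t : Finset (Fin (2 * k + 1)) => k + 1 ≤ t.card) with hF
  -- measure of atoms
  have hEμ : ∀ t : Finset (Fin (2 * k + 1)), μ (E t) = ENNReal.ofReal (q ^ t.card * p ^ tᶜ.card) := by
    intro t
    rw [hE]
    rw [hind.meas_iInter (fun i => ⟨{ind t i}, measurableSet_singleton _, rfl⟩)]
    have hterm : ∀ i, μ (X i ⁻¹' {ind t i})
        = if i ∈ t then ENNReal.ofReal q else ENNReal.ofReal p := by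
      intro i
      by_cases h : i ∈ t <;> simp [hind_def, h, h1 i, h0 i]
    rw [Finset.prod_congr rfl (fun i _ => hterm i), Finset.prod_ite, Finset.prod_const,
      Finset.prod_const]
    have hfil1 : Finset.univ.filter (fun i => i ∈ t) = t := by
      simp [Finset.filter_mem_eq_inter]
    have hfil2 : Finset.univ.filter (fun i => i ∉ t) = tᶜ := by
      ext i; simp
    rw [hfil1, hfil2, ← ENNReal.ofReal_pow hq0, ← ENNReal.ofReal_pow hp0,
      ← ENNReal.ofReal_mul (by positivity)]
  -- set decomposition
  have hT : {ω | k + 1 ≤ ∑ i, X i ω} = ⋃ t ∈ F, E t := by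
    ext ω
    simp only [Set.mem_setOf_eq, Set.mem_iUnion, hF, Finset.mem_filter, Finset.mem_univ,
      true_and, hE, Set.mem_iInter, Set.mem_preimage, Set.mem_singleton_iff, exists_prop]
    constructor
    · intro hω
      refine ⟨Finset.univ.filter (fun i => X i ω = 1), ?_, ?_⟩
      · have hsum : ∑ i, X i ω = (Finset.univ.filter (fun i => X i ω = 1)).card := by
          rw [Finset.card_filter]
          apply Finset.sum_congr rfl
          intro i _
          have := hbin i ω
          by_cases h : X i ω = 1 <;> simp [h] <;> omega
        omega
      · intro i
        have := hbin i ω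
        by_cases h : X i ω = 1 <;> simp [hind_def, h] <;> omega
    · rintro ⟨t, ht, hXt⟩
      have hsum : ∑ i, X i ω = t.card := by
        rw [Finset.sum_congr rfl (fun i _ => hXt i), hind_def]
        simp [Finset.sum_boole, Finset.filter_mem_eq_inter]
      omega
  -- disjointness
  have hdisj : (↑F : Set (Finset (Fin (2 * k + 1)))).PairwiseDisjoint E := by
    intro t _ t' _ hne
    refine Set.disjoint_left.mpr ?_
    intro ω hω hω'
    apply hne
    simp only [hE, Set.mem_iInter, Set.mem_preimage, Set.mem_singleton_iff] at hω hω'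
    ext i
    have h := (hω i).symm.trans (hω' i)
    by_cases h1 : i ∈ t <;> by_cases h2 : i ∈ t' <;>
      simp [hind_def, h1, h2] at h ⊢ <;> tauto
  rw [hT, measure_biUnion_finset hdisj (fun t _ => hEmeas t)]
  rw [Finset.sum_congr rfl (fun t _ => hEμ t),
    ← ENNReal.ofReal_sum_of_nonneg (fun t _ => by positivity)]
  exact ENNReal.ofReal_le_ofReal (majority_sum_key (2 * k + 1) k rfl q hq hq1)
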